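/- Let I be a finite set, and for α ∈ I let Z_α be ℕ-valued random variables, mutually independent under a probability measure P. Let w : I → ℤ and u : I → ℤ be deterministic weight functions, let T = Σ_{α∈I} w(α) Z_α, U_I = Σ_{α∈I} u(α) Z_α, and let t be such that P(T = t) > 0. Let C_I be a random element of ℕ^I equal in distribution (under P) to (Z_I | T = t), and set U = Σ_{α∈I} u(α) C_α. Let θ > 0 with E[θ^{U_I}] < ∞, and let P_θ denote the tilted law under which the Z_α are independent with P_θ(Z_α = k) = θ^{u(α)k} P(Z_α = k)/E[θ^{u(α)Z_α}], and the tilted law of C_I is P_θ(C_I = a) = θ^{Σ_α u(α)a(α)} P(C_I = a)/E[θ^U]. For B ⊆ I write C_B = (C_α)_{α∈B}, U_B = Σ_{α∈B} u(α) Z_α and R_B = Σ_{α∈B} w(α) Z_α. Assume P(U = u₀) > 0. Then d_TV( L(C_B | U = u₀), L_θ(C_B) ) = d_TV( L_θ((U_B, R_B) | U_I = u₀, T = t), L_θ((U_B, R_B) | T = t) ), where L denotes law under P and L_θ law under P_θ. -/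

import Mathlib

open MeasureTheory ProbabilityTheory

/-- Total variation distance between two (sub)probability mass functions on a
countable space: `d_TV(p,q) = (1/2) Σ_s |p s - q s|`. -/
noncomputable def dTV {S : Type*} (p q : S → ℝ) : ℝ := (1 / 2) * ∑' s, |p s - q s|

open scoped ENNReal

lemma key_lintegral {Ω X : Type*} [MeasurableSpace Ω] (μ : Measure Ω)
    [Countable X] [MeasurableSpace X] [MeasurableSingletonClass X]
    (V : Ω → X) (hV : Measurable V) (ρ : X → ℝ≥0∞) (S : Set X) :
    ∫⁻ ω in V ⁻¹' S, ρ (V ω) ∂μ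
      = ∑' a : X, S.indicator (fun a => ρ a * μ (V ⁻¹' {a})) a := by
  have hS : MeasurableSet S := S.to_countable.measurableSet
  rw [← setLIntegral_map hS (measurable_of_countable ρ) hV,
    lintegral_countable ρ S.to_countable, ← tsum_subtype S (fun a => ρ a * μ (V ⁻¹' {a}))]
  exact tsum_congr fun a => by
    rw [Measure.map_apply hV (measurableSet_singleton _)]

lemma key_measure {Ω X : Type*} [MeasurableSpace Ω] (μ : Measure Ω)
    [Countable X] [MeasurableSpace X] [MeasurableSingletonClass X]
    (V : Ω → X) (hV : Measurable V) (S : Set X) :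
    μ (V ⁻¹' S) = ∑' a : X, S.indicator (fun a => μ (V ⁻¹' {a})) a := by
  have h := key_lintegral μ V hV (fun _ => 1) S
  simpa using h

lemma core_transfer {X Y : Type*} (φ : X → Y) (g : X → ℝ≥0∞) (G H K : Y → ℝ≥0∞)
    (NN D : ℝ≥0∞)
    (hG : ∀ y, G y = ∑' b : (φ ⁻¹' {y} : Set X), g b)
    (hGfin : ∀ y, G y ≠ ∞)
    (P Q : X → ℝ≥0∞) (Ph Qh : Y → ℝ≥0∞)
    (hP : ∀ b, P b = g b * H (φ b)) (hPh : ∀ y, Ph y = G y * H y)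
    (hQ : ∀ b, Q b = g b * K (φ b)) (hQh : ∀ y, Qh y = G y * K y) :
    ∑' b, ENNReal.ofReal |(P b / NN).toReal - (Q b / D).toReal|
      = ∑' y, ENNReal.ofReal |(Ph y / NN).toReal - (Qh y / D).toReal| := by
  set d : Y → ℝ≥0∞ := fun y => ENNReal.ofReal |(Ph y / NN).toReal - (Qh y / D).toReal| with hd
  have hgle : ∀ b, g b ≤ G (φ b) := fun b => by
    rw [hG]; exact ENNReal.le_tsum (⟨b, rfl⟩ : (φ ⁻¹' {φ b} : Set X))
  have hdz : ∀ y, G y = 0 → d y = 0 := by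
    intro y hy
    simp [hd, hPh, hQh, hy]
  have key : ∀ b, ENNReal.ofReal |(P b / NN).toReal - (Q b / D).toReal|
      = (g b / G (φ b)) * d (φ b) := by
    intro b
    by_cases h0 : G (φ b) = 0
    · have hgb : g b = 0 := le_antisymm (by simpa [h0] using hgle b) zero_le
      simp [hP, hQ, hgb, h0, hdz _ h0]
    · have hfin : G (φ b) ≠ ∞ := hGfin _
      have hgtop : g b ≠ ∞ := fun h => hfin (top_le_iff.mp (h ▸ hgle b))
      have hκtop : g b / G (φ b) ≠ ∞ := (ENNReal.div_lt_top hgtop h0).ne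
      have hcan : g b / G (φ b) * G (φ b) = g b := ENNReal.div_mul_cancel h0 hfin
      have hPb : P b / NN = (g b / G (φ b)) * (Ph (φ b) / NN) := by
        rw [hPh, ← mul_div_assoc, ← mul_assoc, hcan, ← hP]
      have hQb : Q b / D = (g b / G (φ b)) * (Qh (φ b) / D) := by
        rw [hQh, ← mul_div_assoc, ← mul_assoc, hcan, ← hQ]
      rw [hPb, hQb, ENNReal.toReal_mul, ENNReal.toReal_mul, ← mul_sub, abs_mul,
        abs_of_nonneg ENNReal.toReal_nonneg,
        ENNReal.ofReal_mul ENNReal.toReal_nonneg, ENNReal.ofReal_toReal hκtop]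
  calc ∑' b, ENNReal.ofReal |(P b / NN).toReal - (Q b / D).toReal|
      = ∑' b, (g b / G (φ b)) * d (φ b) := tsum_congr key
    _ = ∑' (p : Σ y : Y, (φ ⁻¹' {y} : Set X)),
          (g p.2 / G (φ p.2)) * d (φ (p.2 : X)) := by
        exact ((Equiv.sigmaFiberEquiv φ).tsum_eq
          (fun b => (g b / G (φ b)) * d (φ b))).symm
    _ = ∑' y, ∑' (b : (φ ⁻¹' {y} : Set X)), (g b / G (φ b)) * d (φ (b : X)) :=
        ENNReal.tsum_sigma' _
    _ = ∑' y, d y := by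
        refine tsum_congr fun y => ?_
        have hmem : ∀ b : (φ ⁻¹' {y} : Set X), φ (b : X) = y := fun b => b.2
        have : ∀ b : (φ ⁻¹' {y} : Set X), (g b / G (φ b)) * d (φ (b : X))
            = g b * (G y)⁻¹ * d y := by
          intro b; rw [hmem b, div_eq_mul_inv]
        rw [tsum_congr this, ENNReal.tsum_mul_right, ENNReal.tsum_mul_right, ← hG]
        by_cases h0 : G y = 0
        · simp [h0, hdz _ h0]
        · rw [← div_eq_mul_inv, ENNReal.div_self h0 (hGfin y), one_mul]

lemma tsum_abs_toReal {Z : Type*} (f g : Z → ℝ≥0∞) :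
    (∑' z, |(f z).toReal - (g z).toReal|)
      = (∑' z, ENNReal.ofReal |(f z).toReal - (g z).toReal|).toReal := by
  rw [ENNReal.tsum_toReal_eq (fun _ => ENNReal.ofReal_ne_top)]
  exact tsum_congr fun z => (ENNReal.toReal_ofReal (abs_nonneg _)).symm

lemma dTV_wrap {X Y : Type*} (p q : X → ℝ≥0∞) (p' q' : Y → ℝ≥0∞)
    (h : ∑' b, ENNReal.ofReal |(p b).toReal - (q b).toReal|
        = ∑' y, ENNReal.ofReal |(p' y).toReal - (q' y).toReal|) :
    dTV (fun b => (p b).toReal) (fun b => (q b).toReal)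
      = dTV (fun y => (p' y).toReal) (fun y => (q' y).toReal) := by
  unfold dTV
  show (1 / 2) * (∑' s, |(p s).toReal - (q s).toReal|)
      = (1 / 2) * (∑' s, |(p' s).toReal - (q' s).toReal|)
  rw [tsum_abs_toReal p q, tsum_abs_toReal p' q', h]

/-- Large deviations, third leg of the triangle: with
`C ≝ (Z | T = t)`, `U = Σ u(α) C_α`, `P_θ` the tilted law of `Z` (density
`θ^{u·Z}/E[θ^{u·Z}]`) and the tilted law of `C` (density `θ^U/E[θ^U]`), for `B ⊆ I`,
`d_TV( L(C_B | U = u₀), L_θ(C_B) )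
  = d_TV( L_θ((U_B,R_B) | U_I = u₀, T = t), L_θ((U_B,R_B) | T = t) )`. -/
theorem stmt17
    {Ω : Type*} [MeasurableSpace Ω] (μ : Measure Ω) [IsProbabilityMeasure μ]
    {I : Type*} [Fintype I]
    (Z : I → Ω → ℕ) (hZmeas : ∀ α, Measurable (Z α))
    (hindep : iIndepFun Z μ)
    (w u : I → ℤ) (t : ℤ)
    (T UI : Ω → ℤ)
    (hT : T = fun ω => ∑ α, w α * (Z α ω : ℤ))
    (hUI : UI = fun ω => ∑ α, u α * (Z α ω : ℤ))
    (hpos : μ {ω | T ω = t} ≠ 0)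
    (C : Ω → I → ℕ) (hCmeas : Measurable C)
    (hC : ∀ a : I → ℕ,
      μ {ω | C ω = a}
        = μ ({ω | (fun α => Z α ω) = a} ∩ {ω | T ω = t}) / μ {ω | T ω = t})
    (U : Ω → ℤ) (hU : U = fun ω => ∑ α, u α * (C ω α : ℤ))
    (θ : ℝ) (hθ : 0 < θ)
    (hint : Integrable (fun ω => θ ^ (∑ α, u α * (Z α ω : ℤ))) μ)
    (EZ EU : ℝ)
    (hEZ : EZ = ∫ ω, θ ^ (∑ α, u α * (Z α ω : ℤ)) ∂μ)
    (hEU : EU = ∫ ω, θ ^ (U ω) ∂μ)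
    (Pθ PθC : Measure Ω)
    (hPθ : Pθ = μ.withDensity (fun ω => ENNReal.ofReal (θ ^ (UI ω) / EZ)))
    (hPθC : PθC = μ.withDensity (fun ω => ENNReal.ofReal (θ ^ (U ω) / EU)))
    (B : Finset I)
    (UB RB : Ω → ℤ)
    (hUB : UB = fun ω => ∑ α ∈ B, u α * (Z α ω : ℤ))
    (hRB : RB = fun ω => ∑ α ∈ B, w α * (Z α ω : ℤ))
    (u₀ : ℤ) (hu₀ : μ {ω | U ω = u₀} ≠ 0) :
    dTV (fun b : B → ℕ =>
           (μ ({ω | (fun α : B => C ω α) = b} ∩ {ω | U ω = u₀})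
              / μ {ω | U ω = u₀}).toReal)
        (fun b : B → ℕ => (PθC {ω | (fun α : B => C ω α) = b}).toReal)
      = dTV (fun pr : ℤ × ℤ =>
               (Pθ ({ω | (UB ω, RB ω) = pr} ∩ {ω | UI ω = u₀ ∧ T ω = t})
                  / Pθ {ω | UI ω = u₀ ∧ T ω = t}).toReal)
            (fun pr : ℤ × ℤ =>
               (Pθ ({ω | (UB ω, RB ω) = pr} ∩ {ω | T ω = t})
                  / Pθ {ω | T ω = t}).toReal) := by
  classical
  -- basic measurable maps and pointwise identities
  set Zv : Ω → (I → ℕ) := fun ω α => Z α ω with hZv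
  have hZvm : Measurable Zv := measurable_pi_lambda _ hZmeas
  set uS : (I → ℕ) → ℤ := fun a => ∑ α, u α * (a α : ℤ) with huS
  set wS : (I → ℕ) → ℤ := fun a => ∑ α, w α * (a α : ℤ) with hwS
  set ub : (I → ℕ) → ℤ := fun a => ∑ α ∈ B, u α * (a α : ℤ) with hub
  set wb : (I → ℕ) → ℤ := fun a => ∑ α ∈ B, w α * (a α : ℤ) with hwb
  set restr : (I → ℕ) → (↥B → ℕ) := fun x α => x ↑α with hrestr
  set m : (I → ℕ) → ℝ≥0∞ := fun a => μ (Zv ⁻¹' {a}) with hm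
  set M : ℝ≥0∞ := μ {ω | T ω = t} with hM
  have Mne : M ≠ 0 := hpos
  have Mfin : M ≠ ∞ := measure_ne_top μ _
  have hUeq : ∀ ω, U ω = uS (C ω) := fun ω => by rw [hU]
  have hTeq : ∀ ω, T ω = wS (Zv ω) := fun ω => by rw [hT]
  have hUIeq : ∀ ω, UI ω = uS (Zv ω) := fun ω => by rw [hUI]
  have hUBeq : ∀ ω, UB ω = ub (Zv ω) := fun ω => by rw [hUB]
  have hRBeq : ∀ ω, RB ω = wb (Zv ω) := fun ω => by rw [hRB]
  -- the point masses of C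
  have hmCif : ∀ a : I → ℕ, μ (C ⁻¹' {a}) = (if wS a = t then m a else 0) * M⁻¹ := by
    intro a
    have hTval : ∀ ω, Zv ω = a → T ω = wS a := by
      intro ω hω
      rw [hTeq ω, hω]
    have hinter : {ω | (fun α => Z α ω) = a} ∩ {ω | T ω = t}
        = if wS a = t then Zv ⁻¹' {a} else ∅ := by
      split_ifs with hw
      · refine Set.inter_eq_left.mpr ?_
        intro ω hω
        exact (hTval ω hω).trans hw
      · ext ω
        simp only [Set.mem_inter_iff, Set.mem_setOf_eq, Set.mem_empty_iff_false, iff_false,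
          not_and]
        intro h1 h2
        exact hw ((hTval ω h1).symm.trans h2)
    have hCa := hC a
    rw [hinter] at hCa
    have : μ (C ⁻¹' {a}) = μ {ω | C ω = a} := rfl
    rw [this, hCa]
    split_ifs with hw
    · rw [div_eq_mul_inv]
    · simp
  -- computation of C-events
  have hCev : ∀ S : Set (I → ℕ),
      μ (C ⁻¹' S) = ∑' a, S.indicator (fun a => (if wS a = t then m a else 0) * M⁻¹) a := by
    intro S
    rw [key_measure μ C hCmeas S]
    refine tsum_congr fun a => ?_
    by_cases h : a ∈ S <;> simp [Set.indicator_apply, h, hmCif a]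
  -- main sums
  set NN : ℝ≥0∞ := ∑' a, if uS a = u₀ ∧ wS a = t then m a else 0 with hNN
  set Dθ : ℝ≥0∞ := ∑' a, if wS a = t then ENNReal.ofReal (θ ^ uS a) * m a else 0 with hDθ
  set Pnum : (↥B → ℕ) → ℝ≥0∞ :=
    fun b => ∑' a, if restr a = b ∧ uS a = u₀ ∧ wS a = t then m a else 0 with hPnum
  set Qnum : (↥B → ℕ) → ℝ≥0∞ :=
    fun b => ∑' a, if restr a = b ∧ wS a = t then ENNReal.ofReal (θ ^ uS a) * m a else 0
    with hQnum
  set Phnum : ℤ × ℤ → ℝ≥0∞ :=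
    fun y => ∑' a, if (ub a, wb a) = y ∧ uS a = u₀ ∧ wS a = t then m a else 0 with hPhnum
  set Qhnum : ℤ × ℤ → ℝ≥0∞ :=
    fun y => ∑' a, if (ub a, wb a) = y ∧ wS a = t then ENNReal.ofReal (θ ^ uS a) * m a else 0
    with hQhnum
  -- denominator on the left
  have hden1 : μ {ω | U ω = u₀} = NN * M⁻¹ := by
    have hUset : {ω | U ω = u₀} = C ⁻¹' {x | uS x = u₀} := by
      ext ω
      simp only [Set.mem_setOf_eq, Set.mem_preimage, hUeq ω]
      try rfl
    rw [hUset, hCev, hNN, ← ENNReal.tsum_mul_right]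
    refine tsum_congr fun a => ?_
    by_cases h1 : uS a = u₀ <;> by_cases h2 : wS a = t <;>
      simp [Set.indicator_apply, h1, h2]
  have hNN0 : NN ≠ 0 := by
    intro h
    exact hu₀ (by rw [hden1, h, zero_mul])
  have hNNfin : NN ≠ ∞ := by
    intro h
    have h2 : μ {ω | U ω = u₀} = ∞ := by
      rw [hden1, h, ENNReal.top_mul (ENNReal.inv_ne_zero.mpr Mfin)]
    exact (measure_ne_top μ _) h2
  -- numerator on the left
  have hnum1 : ∀ b : ↥B → ℕ,
      μ ({ω | (fun α : ↥B => C ω α) = b} ∩ {ω | U ω = u₀}) = Pnum b * M⁻¹ := by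
    intro b
    have hset : {ω | (fun α : ↥B => C ω α) = b} ∩ {ω | U ω = u₀}
        = C ⁻¹' {x | restr x = b ∧ uS x = u₀} := by
      ext ω
      simp only [Set.mem_inter_iff, Set.mem_setOf_eq, Set.mem_preimage, hUeq ω, hrestr]
      try rfl
    rw [hset, hCev]
    simp only [hPnum]
    rw [← ENNReal.tsum_mul_right]
    refine tsum_congr fun a => ?_
    by_cases h1 : restr a = b <;> by_cases h2 : uS a = u₀ <;> by_cases h3 : wS a = t <;>
      simp [Set.indicator_apply, h1, h2, h3]
  -- EZ and EU
  set EZsum : ℝ≥0∞ := ∑' a, ENNReal.ofReal (θ ^ uS a) * m a with hEZsum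
  have hEZlin : ∫⁻ ω, ENNReal.ofReal (θ ^ (∑ α, u α * (Z α ω : ℤ))) ∂μ = EZsum := by
    have h2 := key_lintegral μ Zv hZvm (fun x => ENNReal.ofReal (θ ^ uS x)) Set.univ
    rw [Set.preimage_univ, setLIntegral_univ] at h2
    calc ∫⁻ ω, ENNReal.ofReal (θ ^ (∑ α, u α * (Z α ω : ℤ))) ∂μ
        = ∑' a, Set.univ.indicator
            (fun a => ENNReal.ofReal (θ ^ uS a) * μ (Zv ⁻¹' {a})) a := h2
      _ = EZsum := by
          rw [hEZsum]
          refine tsum_congr fun a => ?_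
          rw [Set.indicator_univ]
  have hEZsumfin : EZsum ≠ ∞ := by
    rw [← hEZlin]
    exact hint.lintegral_lt_top.ne
  have hDθle : Dθ ≤ EZsum := by
    rw [hDθ, hEZsum]
    refine ENNReal.tsum_le_tsum fun a => ?_
    by_cases h : wS a = t <;> simp [h]
  have hDθfin : Dθ ≠ ∞ := (lt_of_le_of_lt hDθle hEZsumfin.lt_top).ne
  have hNNθ : ∑' a, (if uS a = u₀ ∧ wS a = t then ENNReal.ofReal (θ ^ uS a) * m a else 0)
      = ENNReal.ofReal (θ ^ u₀) * NN := by
    rw [hNN, ← ENNReal.tsum_mul_left]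
    refine tsum_congr fun a => ?_
    by_cases h : uS a = u₀ ∧ wS a = t
    · rw [if_pos h, if_pos h, h.1]
    · simp [h]
  have heθ0 : ∀ z : ℤ, ENNReal.ofReal (θ ^ z) ≠ 0 :=
    fun z => (ENNReal.ofReal_pos.mpr (zpow_pos hθ _)).ne'
  have heθfin : ∀ z : ℤ, ENNReal.ofReal (θ ^ z) ≠ ∞ := fun z => ENNReal.ofReal_ne_top
  have hDθ0 : Dθ ≠ 0 := by
    have hle : ENNReal.ofReal (θ ^ u₀) * NN ≤ Dθ := by
      rw [← hNNθ, hDθ]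
      refine ENNReal.tsum_le_tsum fun a => ?_
      by_cases h : uS a = u₀ ∧ wS a = t
      · rw [if_pos h, if_pos h.2]
      · simp [h]
    intro h
    rw [h] at hle
    exact (mul_ne_zero (heθ0 u₀) hNN0) (le_antisymm hle zero_le)
  have hEZsum0 : EZsum ≠ 0 := fun h => hDθ0 (le_antisymm (h ▸ hDθle) zero_le)
  have hEZval : EZ = EZsum.toReal := by
    rw [hEZ, integral_eq_lintegral_of_nonneg_ae
      (Filter.Eventually.of_forall fun ω => zpow_nonneg hθ.le _)
      ((show Measurable fun ω : Ω => θ ^ (∑ α, u α * (Z α ω : ℤ)) from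
        (measurable_of_countable (fun z : ℤ => θ ^ z)).comp
          ((measurable_of_countable uS).comp hZvm)).aestronglyMeasurable),
      hEZlin]
  have hEZpos : 0 < EZ := hEZval ▸ ENNReal.toReal_pos hEZsum0 hEZsumfin
  have hUm : Measurable U := by
    rw [hU]; exact (measurable_of_countable uS).comp hCmeas
  have hEUlin : ∫⁻ ω, ENNReal.ofReal (θ ^ U ω) ∂μ = Dθ * M⁻¹ := by
    have h2 := key_lintegral μ C hCmeas (fun x => ENNReal.ofReal (θ ^ uS x)) Set.univ
    rw [Set.preimage_univ, setLIntegral_univ] at h2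
    calc ∫⁻ ω, ENNReal.ofReal (θ ^ U ω) ∂μ
        = ∫⁻ ω, ENNReal.ofReal (θ ^ uS (C ω)) ∂μ :=
          lintegral_congr fun ω => by rw [hUeq ω]
      _ = ∑' a, Set.univ.indicator
            (fun a => ENNReal.ofReal (θ ^ uS a) * μ (C ⁻¹' {a})) a := h2
      _ = Dθ * M⁻¹ := by
          rw [hDθ, ← ENNReal.tsum_mul_right]
          refine tsum_congr fun a => ?_
          rw [Set.indicator_univ, hmCif a]
          by_cases h : wS a = t <;> simp [h, mul_assoc]
  have hEUval : EU = (Dθ * M⁻¹).toReal := by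
    rw [hEU, integral_eq_lintegral_of_nonneg_ae
      (Filter.Eventually.of_forall fun ω => zpow_nonneg hθ.le _)
      ((show Measurable fun ω : Ω => θ ^ U ω from
        (measurable_of_countable (fun z : ℤ => θ ^ z)).comp hUm).aestronglyMeasurable),
      hEUlin]
  have hDMfin : Dθ * M⁻¹ ≠ ∞ := ENNReal.mul_ne_top hDθfin (ENNReal.inv_ne_top.mpr Mne)
  have hEUpos : 0 < EU :=
    hEUval ▸ ENNReal.toReal_pos (mul_ne_zero hDθ0 (ENNReal.inv_ne_zero.mpr Mfin)) hDMfin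
  have hofEU : ENNReal.ofReal EU = Dθ * M⁻¹ := by
    rw [hEUval, ENNReal.ofReal_toReal hDMfin]
  -- the tilted conditional law of C_B
  have hnum2 : ∀ b : ↥B → ℕ, PθC {ω | (fun α : ↥B => C ω α) = b} = Qnum b / Dθ := by
    intro b
    have hset : {ω | (fun α : ↥B => C ω α) = b} = C ⁻¹' {x | restr x = b} := by
      ext ω
      simp only [Set.mem_setOf_eq, Set.mem_preimage, hrestr]
      try rfl
    rw [hPθC, hset,
      withDensity_apply _ (hCmeas ({x | restr x = b} : Set (I → ℕ)).to_countable.measurableSet)]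
    have h1 : ∫⁻ ω in C ⁻¹' {x | restr x = b}, ENNReal.ofReal (θ ^ U ω / EU) ∂μ
        = ∫⁻ ω in C ⁻¹' {x | restr x = b},
            ENNReal.ofReal (θ ^ uS (C ω)) * (ENNReal.ofReal EU)⁻¹ ∂μ := by
      refine lintegral_congr fun ω => ?_
      rw [hUeq ω, ENNReal.ofReal_div_of_pos hEUpos, div_eq_mul_inv]
    have h1b := key_lintegral μ C hCmeas
      (fun x => ENNReal.ofReal (θ ^ uS x) * (ENNReal.ofReal EU)⁻¹) {x | restr x = b}
    refine (h1.trans h1b).trans ?_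
    have h2 : ∀ a : I → ℕ,
        ({x | restr x = b} : Set (I → ℕ)).indicator
          (fun a => ENNReal.ofReal (θ ^ uS a) * (ENNReal.ofReal EU)⁻¹ * μ (C ⁻¹' {a})) a
        = (if restr a = b ∧ wS a = t then ENNReal.ofReal (θ ^ uS a) * m a else 0)
            * ((ENNReal.ofReal EU)⁻¹ * M⁻¹) := by
      intro a
      rw [Set.indicator_apply, hmCif a]
      by_cases h1 : restr a = b <;> by_cases h2 : wS a = t <;>
        simp [Set.mem_setOf_eq, h1, h2] <;> ring
    have hconst : (ENNReal.ofReal EU)⁻¹ * M⁻¹ = Dθ⁻¹ := by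
      rw [hofEU, ENNReal.mul_inv (Or.inl hDθ0) (Or.inl hDθfin), inv_inv, mul_assoc,
        ENNReal.mul_inv_cancel Mne Mfin, mul_one]
    rw [tsum_congr h2, ENNReal.tsum_mul_right, hconst, ← div_eq_mul_inv]
    try simp only [hQnum]
  -- the tilted law Pθ on Z-events
  have hPθev : ∀ S : Set (I → ℕ),
      Pθ (Zv ⁻¹' S) = (∑' a, S.indicator (fun a => ENNReal.ofReal (θ ^ uS a) * m a) a)
        * (ENNReal.ofReal EZ)⁻¹ := by
    intro S
    rw [hPθ, withDensity_apply _ (hZvm S.to_countable.measurableSet)]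
    have h1 : ∫⁻ ω in Zv ⁻¹' S, ENNReal.ofReal (θ ^ UI ω / EZ) ∂μ
        = ∫⁻ ω in Zv ⁻¹' S,
            ENNReal.ofReal (θ ^ uS (Zv ω)) * (ENNReal.ofReal EZ)⁻¹ ∂μ := by
      refine lintegral_congr fun ω => ?_
      rw [hUIeq ω, ENNReal.ofReal_div_of_pos hEZpos, div_eq_mul_inv]
    have h1b := key_lintegral μ Zv hZvm
      (fun x => ENNReal.ofReal (θ ^ uS x) * (ENNReal.ofReal EZ)⁻¹) S
    refine (h1.trans h1b).trans ?_
    rw [← ENNReal.tsum_mul_right]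
    refine tsum_congr fun a => ?_
    by_cases h : a ∈ S <;> simp [Set.indicator_apply, h] <;> ring
  have heZ0 : (ENNReal.ofReal EZ) ≠ 0 := (ENNReal.ofReal_pos.mpr hEZpos).ne'
  have heZfin : (ENNReal.ofReal EZ) ≠ ∞ := ENNReal.ofReal_ne_top
  have hden3 : Pθ {ω | UI ω = u₀ ∧ T ω = t}
      = (ENNReal.ofReal (θ ^ u₀) * NN) * (ENNReal.ofReal EZ)⁻¹ := by
    have hset : {ω | UI ω = u₀ ∧ T ω = t} = Zv ⁻¹' {x | uS x = u₀ ∧ wS x = t} := by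
      ext ω
      simp only [Set.mem_setOf_eq, Set.mem_preimage, hUIeq ω, hTeq ω]
      try rfl
    rw [hset, hPθev]
    congr 1
    rw [← hNNθ]
    refine tsum_congr fun a => ?_
    by_cases h : uS a = u₀ ∧ wS a = t <;> simp [Set.indicator_apply, h]
  have hnum3 : ∀ pr : ℤ × ℤ, Pθ ({ω | (UB ω, RB ω) = pr} ∩ {ω | UI ω = u₀ ∧ T ω = t})
      = (ENNReal.ofReal (θ ^ u₀) * Phnum pr) * (ENNReal.ofReal EZ)⁻¹ := by
    intro pr
    have hset : {ω | (UB ω, RB ω) = pr} ∩ {ω | UI ω = u₀ ∧ T ω = t}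
        = Zv ⁻¹' {x | (ub x, wb x) = pr ∧ uS x = u₀ ∧ wS x = t} := by
      ext ω
      simp only [Set.mem_inter_iff, Set.mem_setOf_eq, Set.mem_preimage, hUIeq ω, hTeq ω,
        hUBeq ω, hRBeq ω]
      try rfl
    rw [hset, hPθev]
    congr 1
    simp only [hPhnum]
    rw [← ENNReal.tsum_mul_left]
    refine tsum_congr fun a => ?_
    by_cases h : (ub a, wb a) = pr ∧ uS a = u₀ ∧ wS a = t
    · rw [Set.indicator_apply,
        if_pos (show a ∈ {x | (ub x, wb x) = pr ∧ uS x = u₀ ∧ wS x = t} from h),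
        if_pos h, h.2.1]
    · rw [Set.indicator_apply,
        if_neg (show a ∉ {x | (ub x, wb x) = pr ∧ uS x = u₀ ∧ wS x = t} from h),
        if_neg h, mul_zero]
  have hden4 : Pθ {ω | T ω = t} = Dθ * (ENNReal.ofReal EZ)⁻¹ := by
    have hset : {ω | T ω = t} = Zv ⁻¹' {x | wS x = t} := by
      ext ω
      simp only [Set.mem_setOf_eq, Set.mem_preimage, hTeq ω]
      try rfl
    rw [hset, hPθev]
    congr 1
    rw [hDθ]
    refine tsum_congr fun a => ?_
    by_cases h : wS a = t <;> simp [Set.indicator_apply, h]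
  have hnum4 : ∀ pr : ℤ × ℤ, Pθ ({ω | (UB ω, RB ω) = pr} ∩ {ω | T ω = t})
      = Qhnum pr * (ENNReal.ofReal EZ)⁻¹ := by
    intro pr
    have hset : {ω | (UB ω, RB ω) = pr} ∩ {ω | T ω = t}
        = Zv ⁻¹' {x | (ub x, wb x) = pr ∧ wS x = t} := by
      ext ω
      simp only [Set.mem_inter_iff, Set.mem_setOf_eq, Set.mem_preimage, hTeq ω,
        hUBeq ω, hRBeq ω]
      try rfl
    rw [hset, hPθev]
    congr 1
    simp only [hQhnum]
    refine tsum_congr fun a => ?_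
    by_cases h : (ub a, wb a) = pr ∧ wS a = t <;> simp [Set.indicator_apply, h]
  -- independence: factorization of the point masses
  set J := {x : I // x ∉ B} with hJ
  set e : (I → ℕ) ≃ (↥B → ℕ) × (J → ℕ) :=
    Equiv.piEquivPiSubtypeProd (fun α => α ∈ B) (fun _ => ℕ) with he
  set g : (↥B → ℕ) → ℝ≥0∞ := fun b => ∏ α : ↥B, μ (Z ↑α ⁻¹' {b α}) with hg
  set h : (J → ℕ) → ℝ≥0∞ := fun c => ∏ α : J, μ (Z ↑α ⁻¹' {c α}) with hh
  set φm : (↥B → ℕ) → ℤ × ℤ :=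
    fun b => (∑ α : ↥B, u ↑α * (b α : ℤ), ∑ α : ↥B, w ↑α * (b α : ℤ)) with hφm
  set ucm : (J → ℕ) → ℤ := fun c => ∑ α : J, u ↑α * (c α : ℤ) with hucm
  set wcm : (J → ℕ) → ℤ := fun c => ∑ α : J, w ↑α * (c α : ℤ) with hwcm
  set Gm : ℤ × ℤ → ℝ≥0∞ := fun y => ∑' b, if φm b = y then g b else 0 with hGm
  set Hc : ℤ × ℤ → ℝ≥0∞ :=
    fun y => ∑' c, if ucm c = u₀ - y.1 ∧ wcm c = t - y.2 then h c else 0 with hHc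
  set Kc : ℤ × ℤ → ℝ≥0∞ :=
    fun y => ENNReal.ofReal (θ ^ y.1)
      * ∑' c, if wcm c = t - y.2 then ENNReal.ofReal (θ ^ ucm c) * h c else 0 with hKc
  have hresB : ∀ p : (↥B → ℕ) × (J → ℕ), (fun α : ↥B => e.symm p ↑α) = p.1 :=
    fun p => congrArg Prod.fst (e.apply_symm_apply p)
  have hresJ : ∀ p : (↥B → ℕ) × (J → ℕ), (fun α : J => e.symm p ↑α) = p.2 :=
    fun p => congrArg Prod.snd (e.apply_symm_apply p)
  have hmfact : ∀ a : I → ℕ, m a = g (fun α : ↥B => a ↑α) * h (fun α : J => a ↑α) := by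
    intro a
    have hseteq : Zv ⁻¹' {a} = ⋂ α ∈ Finset.univ, Z α ⁻¹' {a α} := by
      ext ω
      simp [hZv, Set.mem_iInter, funext_iff]
    have hind := hindep.measure_inter_preimage_eq_mul (sets := fun α => {a α}) Finset.univ
      (fun i _ => measurableSet_singleton _)
    simp only [hm]
    rw [hseteq, hind, ← Finset.prod_mul_prod_compl B]
    congr 1
    · exact (Finset.prod_coe_sort B fun α => μ (Z α ⁻¹' {a α})).symm
    · exact Finset.prod_subtype Bᶜ (fun x => Finset.mem_compl) fun α => μ (Z α ⁻¹' {a α})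
  have hsplitu : ∀ a : I → ℕ,
      uS a = (φm (fun α : ↥B => a ↑α)).1 + ucm (fun α : J => a ↑α) := by
    intro a
    simp only [huS]
    rw [← Finset.sum_add_sum_compl B (fun α => u α * (a α : ℤ))]
    congr 1
    · exact (Finset.sum_coe_sort B fun α => u α * (a α : ℤ)).symm
    · exact Finset.sum_subtype Bᶜ (fun x => Finset.mem_compl) fun α => u α * (a α : ℤ)
  have hsplitw : ∀ a : I → ℕ,
      wS a = (φm (fun α : ↥B => a ↑α)).2 + wcm (fun α : J => a ↑α) := by
    intro a
    simp only [hwS]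
    rw [← Finset.sum_add_sum_compl B (fun α => w α * (a α : ℤ))]
    congr 1
    · exact (Finset.sum_coe_sort B fun α => w α * (a α : ℤ)).symm
    · exact Finset.sum_subtype Bᶜ (fun x => Finset.mem_compl) fun α => w α * (a α : ℤ)
  have hubφ : ∀ a : I → ℕ, ub a = (φm (fun α : ↥B => a ↑α)).1 :=
    fun a => (Finset.sum_coe_sort B fun α => u α * (a α : ℤ)).symm
  have hwbφ : ∀ a : I → ℕ, wb a = (φm (fun α : ↥B => a ↑α)).2 :=
    fun a => (Finset.sum_coe_sort B fun α => w α * (a α : ℤ)).symm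
  -- G is finite
  have hVBm : Measurable (fun ω (α : ↥B) => Z ↑α ω) :=
    measurable_pi_lambda _ fun α => hZmeas ↑α
  have galt : ∀ b : ↥B → ℕ, g b = μ ((fun ω (α : ↥B) => Z ↑α ω) ⁻¹' {b}) := by
    intro b
    set sets : I → Set ℕ := fun α => if hα : α ∈ B then ({b ⟨α, hα⟩} : Set ℕ) else Set.univ
      with hsets
    have hmeas : ∀ α ∈ B, MeasurableSet (sets α) := by
      intro α _
      by_cases hα : α ∈ B <;> simp [hsets, hα]
    have hind := hindep.measure_inter_preimage_eq_mul (sets := sets) B hmeas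
    have hset : (fun ω (α : ↥B) => Z ↑α ω) ⁻¹' {b} = ⋂ α ∈ B, Z α ⁻¹' sets α := by
      ext ω
      simp only [Set.mem_preimage, Set.mem_singleton_iff, Set.mem_iInter, funext_iff]
      constructor
      · intro hω α hα
        simp only [hsets, hα, dif_pos]
        exact hω ⟨α, hα⟩
      · intro hω α
        have h9 := hω ↑α α.2
        simpa [hsets, α.2] using h9
    rw [hset, hind]
    calc g b = ∏ α : ↥B, μ (Z ↑α ⁻¹' sets ↑α) := by
          simp only [hg]
          refine Finset.prod_congr rfl fun α _ => ?_
          simp [hsets, α.2]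
      _ = ∏ α ∈ B, μ (Z α ⁻¹' sets α) := Finset.prod_coe_sort B fun α => μ (Z α ⁻¹' sets α)
  have hGfin : ∀ y, Gm y ≠ ∞ := by
    intro y
    have h1 : Gm y ≤ ∑' b, g b := by
      simp only [hGm]
      exact ENNReal.tsum_le_tsum fun b => by by_cases hb : φm b = y <;> simp [hb]
    have h2 : ∑' b : ↥B → ℕ, g b = μ Set.univ := by
      have h3 := key_measure μ (fun ω (α : ↥B) => Z ↑α ω) hVBm Set.univ
      rw [Set.preimage_univ] at h3
      rw [h3]
      exact tsum_congr fun b => by rw [Set.indicator_univ, galt b]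
    exact fun hcon => (measure_ne_top μ Set.univ) (top_le_iff.mp (hcon ▸ h1.trans h2.le))
  -- additivity of the weight
  have hθadd : ∀ z1 z2 : ℤ,
      ENNReal.ofReal (θ ^ (z1 + z2)) = ENNReal.ofReal (θ ^ z1) * ENNReal.ofReal (θ ^ z2) :=
    fun z1 z2 => by rw [zpow_add₀ hθ.ne' z1 z2, ENNReal.ofReal_mul (zpow_nonneg hθ.le _)]
  -- the four factorizations
  have hPfact : ∀ b, Pnum b = g b * Hc (φm b) := by
    intro b
    simp only [hPnum]
    rw [← Equiv.tsum_eq e.symm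
      (fun a => if restr a = b ∧ uS a = u₀ ∧ wS a = t then m a else 0), ENNReal.tsum_prod']
    have hterm : ∀ (b' : ↥B → ℕ) (c : J → ℕ),
        (if restr (e.symm (b', c)) = b ∧ uS (e.symm (b', c)) = u₀ ∧ wS (e.symm (b', c)) = t
          then m (e.symm (b', c)) else 0)
        = if b' = b then
            (g b * (if ucm c = u₀ - (φm b).1 ∧ wcm c = t - (φm b).2 then h c else 0))
          else 0 := by
      intro b' c
      have h1 : restr (e.symm (b', c)) = b' := hresB (b', c)
      have h2 : uS (e.symm (b', c)) = (φm b').1 + ucm c := by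
        rw [hsplitu (e.symm (b', c)), hresB (b', c), hresJ (b', c)]
      have h3 : wS (e.symm (b', c)) = (φm b').2 + wcm c := by
        rw [hsplitw (e.symm (b', c)), hresB (b', c), hresJ (b', c)]
      have h4 : m (e.symm (b', c)) = g b' * h c := by
        rw [hmfact (e.symm (b', c)), hresB (b', c), hresJ (b', c)]
      rw [h1, h2, h3, h4]
      by_cases hb : b' = b
      · rw [hb, if_pos (rfl : b = b)]
        by_cases hcond : ucm c = u₀ - (φm b).1 ∧ wcm c = t - (φm b).2
        · rw [if_pos ⟨rfl, show (φm b).1 + ucm c = u₀ ∧ (φm b).2 + wcm c = t by omega⟩,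
            if_pos hcond]
        · rw [if_neg (fun hcon => hcond ⟨by omega, by omega⟩), if_neg hcond, mul_zero]
      · rw [if_neg (fun hcon => hb hcon.1), if_neg hb]
    rw [tsum_congr fun b' => tsum_congr fun c => hterm b' c]
    have hsw : ∀ b' : ↥B → ℕ,
        (∑' c, if b' = b then
          (g b * (if ucm c = u₀ - (φm b).1 ∧ wcm c = t - (φm b).2 then h c else 0)) else 0)
        = if b' = b then g b * Hc (φm b) else 0 := by
      intro b'
      by_cases hb : b' = b
      · rw [hb]
        simp only [eq_self_iff_true, if_true]
        rw [ENNReal.tsum_mul_left]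
        try simp only [hHc]
      · simp [hb]
    rw [tsum_congr hsw, tsum_eq_single b (fun b' hb => if_neg hb)]
    try rw [if_pos rfl]
  have hPhfact : ∀ y, Phnum y = Gm y * Hc y := by
    intro y
    simp only [hPhnum]
    rw [← Equiv.tsum_eq e.symm
      (fun a => if (ub a, wb a) = y ∧ uS a = u₀ ∧ wS a = t then m a else 0),
      ENNReal.tsum_prod']
    have hterm : ∀ (b' : ↥B → ℕ) (c : J → ℕ),
        (if (ub (e.symm (b', c)), wb (e.symm (b', c))) = y ∧ uS (e.symm (b', c)) = u₀
            ∧ wS (e.symm (b', c)) = t then m (e.symm (b', c)) else 0)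
        = (if φm b' = y then g b' else 0)
            * (if ucm c = u₀ - y.1 ∧ wcm c = t - y.2 then h c else 0) := by
      intro b' c
      have h2 : uS (e.symm (b', c)) = (φm b').1 + ucm c := by
        rw [hsplitu (e.symm (b', c)), hresB (b', c), hresJ (b', c)]
      have h3 : wS (e.symm (b', c)) = (φm b').2 + wcm c := by
        rw [hsplitw (e.symm (b', c)), hresB (b', c), hresJ (b', c)]
      have h4 : m (e.symm (b', c)) = g b' * h c := by
        rw [hmfact (e.symm (b', c)), hresB (b', c), hresJ (b', c)]
      have h5 : ub (e.symm (b', c)) = (φm b').1 := by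
        rw [hubφ (e.symm (b', c)), hresB (b', c)]
      have h6 : wb (e.symm (b', c)) = (φm b').2 := by
        rw [hwbφ (e.symm (b', c)), hresB (b', c)]
      rw [h2, h3, h4, h5, h6, Prod.mk.eta]
      by_cases hy : φm b' = y
      · rw [hy, if_pos (rfl : y = y)]
        by_cases hcond : ucm c = u₀ - y.1 ∧ wcm c = t - y.2
        · rw [if_pos ⟨rfl, show y.1 + ucm c = u₀ ∧ y.2 + wcm c = t by omega⟩, if_pos hcond]
        · rw [if_neg (fun hcon => hcond ⟨by omega, by omega⟩), if_neg hcond, mul_zero]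
      · rw [if_neg (fun hcon => hy hcon.1), if_neg hy, zero_mul]
    rw [tsum_congr fun b' => tsum_congr fun c => hterm b' c]
    calc ∑' (b' : ↥B → ℕ), ∑' (c : J → ℕ), (if φm b' = y then g b' else 0)
          * (if ucm c = u₀ - y.1 ∧ wcm c = t - y.2 then h c else 0)
        = ∑' (b' : ↥B → ℕ), (if φm b' = y then g b' else 0) * Hc y := by
          refine tsum_congr fun b' => ?_
          rw [ENNReal.tsum_mul_left]
          try simp only [hHc]
      _ = Gm y * Hc y := by
          rw [ENNReal.tsum_mul_right]
          try simp only [hGm]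
  have hQfact : ∀ b, Qnum b = g b * Kc (φm b) := by
    intro b
    simp only [hQnum]
    rw [← Equiv.tsum_eq e.symm
      (fun a => if restr a = b ∧ wS a = t then ENNReal.ofReal (θ ^ uS a) * m a else 0),
      ENNReal.tsum_prod']
    have hterm : ∀ (b' : ↥B → ℕ) (c : J → ℕ),
        (if restr (e.symm (b', c)) = b ∧ wS (e.symm (b', c)) = t
          then ENNReal.ofReal (θ ^ uS (e.symm (b', c))) * m (e.symm (b', c)) else 0)
        = if b' = b then
            (g b * (ENNReal.ofReal (θ ^ (φm b).1)
              * (if wcm c = t - (φm b).2 then ENNReal.ofReal (θ ^ ucm c) * h c else 0)))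
          else 0 := by
      intro b' c
      have h1 : restr (e.symm (b', c)) = b' := hresB (b', c)
      have h2 : uS (e.symm (b', c)) = (φm b').1 + ucm c := by
        rw [hsplitu (e.symm (b', c)), hresB (b', c), hresJ (b', c)]
      have h3 : wS (e.symm (b', c)) = (φm b').2 + wcm c := by
        rw [hsplitw (e.symm (b', c)), hresB (b', c), hresJ (b', c)]
      have h4 : m (e.symm (b', c)) = g b' * h c := by
        rw [hmfact (e.symm (b', c)), hresB (b', c), hresJ (b', c)]
      rw [h1, h2, h3, h4]
      by_cases hb : b' = b
      · rw [hb, if_pos (rfl : b = b)]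
        by_cases hcond : wcm c = t - (φm b).2
        · rw [if_pos ⟨rfl, show (φm b).2 + wcm c = t by omega⟩, if_pos hcond, hθadd]
          ring
        · rw [if_neg (fun hcon => hcond (by omega)), if_neg hcond, mul_zero, mul_zero]
      · rw [if_neg (fun hcon => hb hcon.1), if_neg hb]
    rw [tsum_congr fun b' => tsum_congr fun c => hterm b' c]
    have hsw : ∀ b' : ↥B → ℕ,
        (∑' c, if b' = b then
          (g b * (ENNReal.ofReal (θ ^ (φm b).1)
            * (if wcm c = t - (φm b).2 then ENNReal.ofReal (θ ^ ucm c) * h c else 0))) else 0)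
        = if b' = b then g b * Kc (φm b) else 0 := by
      intro b'
      by_cases hb : b' = b
      · rw [hb]
        simp only [eq_self_iff_true, if_true]
        rw [ENNReal.tsum_mul_left, ENNReal.tsum_mul_left]
        try simp only [hKc]
      · simp [hb]
    rw [tsum_congr hsw, tsum_eq_single b (fun b' hb => if_neg hb)]
    try rw [if_pos rfl]
  have hQhfact : ∀ y, Qhnum y = Gm y * Kc y := by
    intro y
    simp only [hQhnum]
    rw [← Equiv.tsum_eq e.symm
      (fun a => if (ub a, wb a) = y ∧ wS a = t then ENNReal.ofReal (θ ^ uS a) * m a else 0),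
      ENNReal.tsum_prod']
    have hterm : ∀ (b' : ↥B → ℕ) (c : J → ℕ),
        (if (ub (e.symm (b', c)), wb (e.symm (b', c))) = y ∧ wS (e.symm (b', c)) = t
          then ENNReal.ofReal (θ ^ uS (e.symm (b', c))) * m (e.symm (b', c)) else 0)
        = (if φm b' = y then g b' else 0)
            * (ENNReal.ofReal (θ ^ y.1)
              * (if wcm c = t - y.2 then ENNReal.ofReal (θ ^ ucm c) * h c else 0)) := by
      intro b' c
      have h2 : uS (e.symm (b', c)) = (φm b').1 + ucm c := by
        rw [hsplitu (e.symm (b', c)), hresB (b', c), hresJ (b', c)]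
      have h3 : wS (e.symm (b', c)) = (φm b').2 + wcm c := by
        rw [hsplitw (e.symm (b', c)), hresB (b', c), hresJ (b', c)]
      have h4 : m (e.symm (b', c)) = g b' * h c := by
        rw [hmfact (e.symm (b', c)), hresB (b', c), hresJ (b', c)]
      have h5 : ub (e.symm (b', c)) = (φm b').1 := by
        rw [hubφ (e.symm (b', c)), hresB (b', c)]
      have h6 : wb (e.symm (b', c)) = (φm b').2 := by
        rw [hwbφ (e.symm (b', c)), hresB (b', c)]
      rw [h2, h3, h4, h5, h6, Prod.mk.eta]
      by_cases hy : φm b' = y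
      · rw [hy, if_pos (rfl : y = y)]
        by_cases hcond : wcm c = t - y.2
        · rw [if_pos ⟨rfl, show y.2 + wcm c = t by omega⟩, if_pos hcond, hθadd]
          ring
        · rw [if_neg (fun hcon => hcond (by omega)), if_neg hcond, mul_zero, mul_zero]
      · rw [if_neg (fun hcon => hy hcon.1), if_neg hy, zero_mul]
    rw [tsum_congr fun b' => tsum_congr fun c => hterm b' c]
    calc ∑' (b' : ↥B → ℕ), ∑' (c : J → ℕ), (if φm b' = y then g b' else 0)
          * (ENNReal.ofReal (θ ^ y.1)
            * (if wcm c = t - y.2 then ENNReal.ofReal (θ ^ ucm c) * h c else 0))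
        = ∑' (b' : ↥B → ℕ), (if φm b' = y then g b' else 0) * Kc y := by
          refine tsum_congr fun b' => ?_
          rw [ENNReal.tsum_mul_left, ENNReal.tsum_mul_left]
          try simp only [hKc]
      _ = Gm y * Kc y := by
          rw [ENNReal.tsum_mul_right]
          try simp only [hGm]
  have hGsub : ∀ y, Gm y = ∑' b : (φm ⁻¹' {y} : Set (↥B → ℕ)), g b := by
    intro y
    rw [tsum_subtype (φm ⁻¹' {y}) g]
    simp only [hGm]
    refine tsum_congr fun b => ?_
    by_cases hb : φm b = y <;> simp [Set.indicator_apply, hb]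
  -- conclusion
  have hcore := core_transfer φm g Gm Hc Kc NN Dθ hGsub hGfin Pnum Qnum Phnum Qhnum
    hPfact hPhfact hQfact hQhfact
  have hmain := dTV_wrap (fun b => Pnum b / NN) (fun b => Qnum b / Dθ)
    (fun y => Phnum y / NN) (fun y => Qhnum y / Dθ) hcore
  have g1 : (fun b : ↥B → ℕ =>
      (μ ({ω | (fun α : ↥B => C ω α) = b} ∩ {ω | U ω = u₀}) / μ {ω | U ω = u₀}).toReal)
      = fun b : ↥B → ℕ => (Pnum b / NN).toReal := by
    funext b
    rw [hnum1 b, hden1,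
      ENNReal.mul_div_mul_right _ _ (ENNReal.inv_ne_zero.mpr Mfin) (ENNReal.inv_ne_top.mpr Mne)]
  have g2 : (fun b : ↥B → ℕ => (PθC {ω | (fun α : ↥B => C ω α) = b}).toReal)
      = fun b : ↥B → ℕ => (Qnum b / Dθ).toReal := by
    funext b
    rw [hnum2 b]
  have g3 : (fun pr : ℤ × ℤ =>
      (Pθ ({ω | (UB ω, RB ω) = pr} ∩ {ω | UI ω = u₀ ∧ T ω = t})
        / Pθ {ω | UI ω = u₀ ∧ T ω = t}).toReal)
      = fun pr : ℤ × ℤ => (Phnum pr / NN).toReal := by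
    funext pr
    rw [hnum3 pr, hden3,
      ENNReal.mul_div_mul_right _ _ (ENNReal.inv_ne_zero.mpr heZfin)
        (ENNReal.inv_ne_top.mpr heZ0),
      ENNReal.mul_div_mul_left _ _ (heθ0 u₀) (heθfin u₀)]
  have g4 : (fun pr : ℤ × ℤ =>
      (Pθ ({ω | (UB ω, RB ω) = pr} ∩ {ω | T ω = t}) / Pθ {ω | T ω = t}).toReal)
      = fun pr : ℤ × ℤ => (Qhnum pr / Dθ).toReal := by
    funext pr
    rw [hnum4 pr, hden4,
      ENNReal.mul_div_mul_right _ _ (ENNReal.inv_ne_zero.mpr heZfin)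
        (ENNReal.inv_ne_top.mpr heZ0)]
  rw [g1, g2, g3, g4]
  exact hmain
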